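/- Let Ω be a compact Hausdorff topological space equipped with its Borel σ-algebra and a probability measure μ that is inner regular with respect to compact sets and faithful (μ(U) > 0 for every nonempty open U). Then for every ultrafilter 𝒰 on the measure algebra of (Ω, μ) there exists ω ∈ Ω such that 𝒟_ω ⊆ 𝒰. -/

import Mathlib

open MeasureTheory

/-- An *ultrafilter on the measure algebra* of `(Ω, μ)`: a collection of measurable,
non-null subsets of `Ω`, closed under intersection and under almost-everywhere
enlargement, containing every measurable set or its complement. -/
structure IsMeasureUltrafilter {Ω : Type*} [MeasurableSpace Ω] (μ : Measure Ω)
    (U : Set (Set Ω)) : Prop where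
  measurableSet_of_mem : ∀ F ∈ U, MeasurableSet F
  not_null : ∀ F ∈ U, μ F ≠ 0
  inter_mem : ∀ F ∈ U, ∀ G ∈ U, F ∩ G ∈ U
  mem_of_ae_subset : ∀ F ∈ U, ∀ G : Set Ω, MeasurableSet G → μ (F \ G) = 0 → G ∈ U
  mem_or_compl_mem : ∀ F : Set Ω, MeasurableSet F → F ∈ U ∨ Fᶜ ∈ U

/-- `UltraLim μ U f a` means `lim_U f = a`: for every `ε > 0` there is `F ∈ U` such that
all averages of `f` over measurable subsets of `F` of finite positive measure are within
`ε` of `a`. -/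
def UltraLim {Ω : Type*} [MeasurableSpace Ω] (μ : Measure Ω) (U : Set (Set Ω))
    (f : Ω → ℂ) (a : ℂ) : Prop :=
  ∀ ε : ℝ, 0 < ε → ∃ F ∈ U, ∀ X : Set Ω, X ⊆ F → MeasurableSet X →
    0 < μ X → μ X < ⊤ → ‖(μ X).toReal⁻¹ • ∫ x in X, f x ∂μ - a‖ < ε

/-- A measure is *semifinite* if every measurable set of infinite measure contains a
measurable subset of finite positive measure. -/
def Semifinite {Ω : Type*} [MeasurableSpace Ω] (μ : Measure Ω) : Prop :=
  ∀ E : Set Ω, MeasurableSet E → μ E = ⊤ →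
    ∃ F : Set Ω, F ⊆ E ∧ MeasurableSet F ∧ 0 < μ F ∧ μ F < ⊤

universe u

/-- A measure is *decomposable* if there is a partition of `Ω` into measurable sets of
finite measure which detects measurability and along which `μ` sums. -/
def Decomposable {Ω : Type u} [MeasurableSpace Ω] (μ : Measure Ω) : Prop :=
  ∃ (ι : Type u) (P : ι → Set Ω),
    (∀ i, MeasurableSet (P i)) ∧ (∀ i, μ (P i) < ⊤) ∧
    (Pairwise fun i j => Disjoint (P i) (P j)) ∧
    (⋃ i, P i) = Set.univ ∧
    (∀ E : Set Ω, (∀ i, MeasurableSet (E ∩ P i)) → MeasurableSet E) ∧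
    (∀ E : Set Ω, MeasurableSet E → μ E = ∑' i, μ (E ∩ P i))

/-- Proposition III.3. On a compact Hausdorff space with a faithful
inner-regular Borel probability measure, every ultrafilter on the measure algebra contains
the filter of almost-neighborhoods `𝒟_ω` of some point `ω`. -/
theorem ultrafilter_contains_neighborhood_filter {Ω : Type u} [TopologicalSpace Ω]
    [CompactSpace Ω] [T2Space Ω] [MeasurableSpace Ω] [BorelSpace Ω]
    (μ : Measure Ω) [IsProbabilityMeasure μ] [μ.InnerRegular]
    (hfaithful : ∀ V : Set Ω, IsOpen V → V.Nonempty → 0 < μ V)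
    (U : Set (Set Ω)) (hU : IsMeasureUltrafilter μ U) :
    ∃ ω : Ω,
      {X : Set Ω | MeasurableSet X ∧ ∃ V : Set Ω, IsOpen V ∧ ω ∈ V ∧ μ (V \ X) = 0} ⊆ U := by
  classical
  set C : Set Ω → Set Ω := fun F => {x | ∀ V : Set Ω, IsOpen V → x ∈ V → 0 < μ (V ∩ F)} with hC
  have hmono : ∀ F G : Set Ω, F ⊆ G → C F ⊆ C G := by
    intro F G hFG x hx V hV hxV
    exact lt_of_lt_of_le (hx V hV hxV) (measure_mono (Set.inter_subset_inter_right _ hFG))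
  have hclosed : ∀ F, IsClosed (C F) := by
    intro F
    rw [← isOpen_compl_iff, isOpen_iff_forall_mem_open]
    intro x hx
    simp only [hC, Set.mem_compl_iff, Set.mem_setOf_eq, not_forall, not_lt,
      nonpos_iff_eq_zero] at hx
    obtain ⟨V, hVopen, hxV, hVF⟩ := hx
    refine ⟨V, fun y hy => ?_, hVopen, hxV⟩
    simp only [hC, Set.mem_compl_iff, Set.mem_setOf_eq, not_forall, not_lt,
      nonpos_iff_eq_zero]
    exact ⟨V, hVopen, hy, hVF⟩
  have hnull : ∀ F : Set Ω, MeasurableSet F → μ (F \ C F) = 0 := by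
    intro F hF
    by_contra h
    have hmC : MeasurableSet (F \ C F) := hF.diff (hclosed F).measurableSet
    have hpos : (0 : ENNReal) < μ (F \ C F) := pos_iff_ne_zero.mpr h
    obtain ⟨K, hKsub, hKc, hKpos⟩ := hmC.exists_lt_isCompact hpos
    have hcov : ∀ x ∈ K, ∃ V : Set Ω, IsOpen V ∧ x ∈ V ∧ μ (V ∩ F) = 0 := by
      intro x hx
      have hxC : x ∉ C F := (hKsub hx).2
      simp only [hC, Set.mem_setOf_eq, not_forall, not_lt, nonpos_iff_eq_zero] at hxC
      obtain ⟨V, hVopen, hxV, hVF⟩ := hxC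
      exact ⟨V, hVopen, hxV, hVF⟩
    choose! V hVopen hxV hVnull using hcov
    obtain ⟨t, ht⟩ := hKc.elim_nhds_subcover V (fun x hx => (hVopen x hx).mem_nhds (hxV x hx))
    have hKF : K ⊆ F := hKsub.trans Set.diff_subset
    have hsub : K ⊆ ⋃ x ∈ t, (V x ∩ F) := by
      intro y hy
      obtain ⟨x, hxt, hyx⟩ := Set.mem_iUnion₂.mp (ht.2 hy)
      exact Set.mem_iUnion₂.mpr ⟨x, hxt, hyx, hKF hy⟩
    have : μ K = 0 := by
      refine measure_mono_null hsub ?_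
      refine (measure_biUnion_null_iff t.countable_toSet).mpr ?_
      intro x hxt
      exact hVnull x (ht.1 x hxt)
    exact (hKpos.ne' this).elim
  have hUuniv : Set.univ ∈ U := by
    rcases hU.mem_or_compl_mem Set.univ MeasurableSet.univ with h | h
    · exact h
    · exact absurd (by simp : μ (Set.univᶜ) = 0) (hU.not_null _ h)
  have hCne : ∀ F ∈ U, (C F).Nonempty := by
    intro F hF
    have hFm := hU.measurableSet_of_mem F hF
    have hne : μ (C F) ≠ 0 := by
      intro h0
      apply hU.not_null F hF
      have : μ F ≤ μ (F \ C F) + μ (C F) := by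
        refine le_trans (measure_mono fun x hx => ?_) (measure_union_le _ _)
        by_cases hxC : x ∈ C F
        · exact Or.inr hxC
        · exact Or.inl ⟨hx, hxC⟩
      rw [hnull F hFm, h0, add_zero] at this
      exact le_antisymm this zero_le
    exact nonempty_of_measure_ne_zero hne
  have : Nonempty U := ⟨⟨Set.univ, hUuniv⟩⟩
  obtain ⟨ω, hω⟩ := IsCompact.nonempty_iInter_of_directed_nonempty_isCompact_isClosed
    (fun F : U => C F.1)
    (fun F G => ⟨⟨F.1 ∩ G.1, hU.inter_mem F.1 F.2 G.1 G.2⟩,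
      hmono _ _ Set.inter_subset_left, hmono _ _ Set.inter_subset_right⟩)
    (fun F => hCne F.1 F.2)
    (fun F => (hclosed F.1).isCompact)
    (fun F => hclosed F.1)
  refine ⟨ω, ?_⟩
  rintro X ⟨hXm, V, hVopen, hωV, hVX⟩
  rcases hU.mem_or_compl_mem X hXm with h | h
  · exact h
  · exfalso
    have hωC : ω ∈ C Xᶜ := Set.mem_iInter.mp hω ⟨Xᶜ, h⟩
    have hpos := hωC V hVopen hωV
    rw [show V ∩ Xᶜ = V \ X from rfl, hVX] at hpos
    exact lt_irrefl _ hpos
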